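/- Let d ≥ 1, let Ω ⊆ ℝ^d be a bounded open set, let f : ℝ^d → ℝ^d be C¹ and D : ℝ^d → ℝ^{d×d} be C², and suppose: (i) ∑_{i,j} D_{ij}(x) ξ_i ξ_j ≥ C_D |ξ|² for all x ∈ Ω and ξ ∈ ℝ^d, where C_D > 0; (ii) C_P > 0 satisfies ∫_Ω u² dx ≤ C_P ∫_Ω |∇u|² dx for every C¹ function u compactly supported in Ω; (iii) with b_i = (1/2) ∑_{j=1}^d ∂_{x_j} D_{ij} − f_i, there is a constant C₀ > 0 such that C_D/C_P − (∇·b)(x) ≥ C₀ for all x ∈ Ω. Let p and p_N be C² functions with compact support contained in Ω such that ℒp = 0 on Ω, where ℒq = −∑_{i=1}^d ∂_{x_i}(f_i q) + (1/2) ∑_{i,j=1}^d ∂_{x_i}∂_{x_j}(D_{ij} q). Then C₀² ∫_Ω (p(x) − p_N(x))² dx ≤ 4 ∫_Ω (ℒp_N)(x)² dx. -/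

import Mathlib

open MeasureTheory Function

/-- Partial derivative in the `i`-th coordinate direction. -/
noncomputable def pd {d : ℕ} (i : Fin d) (g : (Fin d → ℝ) → ℝ) : (Fin d → ℝ) → ℝ :=
  fun x => fderiv ℝ g x (Pi.single i 1)

/-- The Fokker-Planck operator `ℒq = -∑ᵢ ∂ᵢ(fᵢ q) + (1/2) ∑ᵢⱼ ∂ᵢ∂ⱼ(Dᵢⱼ q)`. -/
noncomputable def fokkerPlanck {d : ℕ} (f : (Fin d → ℝ) → Fin d → ℝ)
    (D : (Fin d → ℝ) → Fin d → Fin d → ℝ) (q : (Fin d → ℝ) → ℝ) : (Fin d → ℝ) → ℝ :=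
  fun x => -(∑ i, pd i (fun y => f y i * q y) x)
    + (1 / 2) * ∑ i, ∑ j, pd i (pd j (fun y => D y i j * q y)) x

/-- The vector field `bᵢ = (1/2) ∑ⱼ ∂ⱼ Dᵢⱼ - fᵢ`. -/
noncomputable def bvec {d : ℕ} (f : (Fin d → ℝ) → Fin d → ℝ)
    (D : (Fin d → ℝ) → Fin d → Fin d → ℝ) : (Fin d → ℝ) → Fin d → ℝ :=
  fun x i => (1 / 2) * ∑ j, pd j (fun y => D y i j) x - f x i

/-- The divergence `∇·b = ∑ᵢ ∂ᵢ bᵢ` of the vector field `b`. -/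
noncomputable def divb {d : ℕ} (f : (Fin d → ℝ) → Fin d → ℝ)
    (D : (Fin d → ℝ) → Fin d → Fin d → ℝ) : (Fin d → ℝ) → ℝ :=
  fun x => ∑ i, pd i (fun y => bvec f D y i) x

section helpers

variable {d : ℕ}

lemma contDiff_pd {n : ℕ} (i : Fin d) {g : (Fin d → ℝ) → ℝ} (hg : ContDiff ℝ (n+1) g) :
    ContDiff ℝ n (pd i g) :=
  (hg.fderiv_right (m := n) (by norm_cast)).clm_apply contDiff_const

lemma support_pd (i : Fin d) (g : (Fin d → ℝ) → ℝ) :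
    support (pd i g) ⊆ tsupport g := by
  intro x hx
  by_contra hxs
  have h : g =ᶠ[nhds x] 0 := notMem_tsupport_iff_eventuallyEq.mp hxs
  have h2 : fderiv ℝ g x = fderiv ℝ (0 : (Fin d → ℝ) → ℝ) x := h.fderiv_eq
  apply hx
  simp [pd, h2, Pi.zero_def, fderiv_fun_const]

lemma hcs_pd (i : Fin d) {g : (Fin d → ℝ) → ℝ} (hg : HasCompactSupport g) :
    HasCompactSupport (pd i g) :=
  hg.mono' (support_pd i g)

lemma tsupport_pd (i : Fin d) (g : (Fin d → ℝ) → ℝ) :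
    tsupport (pd i g) ⊆ tsupport g :=
  closure_minimal (support_pd i g) isClosed_closure

lemma pd_zero_of (i : Fin d) {g h : (Fin d → ℝ) → ℝ} {x : Fin d → ℝ}
    (hsub : tsupport g ⊆ tsupport h) (hx : x ∉ tsupport h) : pd i g x = 0 := by
  by_contra hne
  exact hx (hsub (support_pd i g (mem_support.mpr hne)))

lemma pd_mul {g h : (Fin d → ℝ) → ℝ} {x} (hg : DifferentiableAt ℝ g x)
    (hh : DifferentiableAt ℝ h x) (i : Fin d) :
    pd i (fun y => g y * h y) x = pd i g x * h x + g x * pd i h x := by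
  simp [pd, fderiv_fun_mul hg hh]
  ring

lemma pd_sub {g h : (Fin d → ℝ) → ℝ} {x} (hg : DifferentiableAt ℝ g x)
    (hh : DifferentiableAt ℝ h x) (i : Fin d) :
    pd i (fun y => g y - h y) x = pd i g x - pd i h x := by
  simp [pd, fderiv_fun_sub hg hh]

lemma pd_const_mul {g : (Fin d → ℝ) → ℝ} {x} (hg : DifferentiableAt ℝ g x) (c : ℝ) (i : Fin d) :
    pd i (fun y => c * g y) x = c * pd i g x := by
  simp [pd, fderiv_const_mul hg c]

lemma pd_sum {s : Finset (Fin d)} {g : Fin d → (Fin d → ℝ) → ℝ} {x}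
    (hg : ∀ j ∈ s, DifferentiableAt ℝ (g j) x) (i : Fin d) :
    pd i (fun y => ∑ j ∈ s, g j y) x = ∑ j ∈ s, pd i (g j) x := by
  simp [pd, fderiv_fun_sum hg]

lemma my_ibp {g h : (Fin d → ℝ) → ℝ} (i : Fin d)
    (hg : ContDiff ℝ 1 g) (hh : ContDiff ℝ 1 h) (hsupp : HasCompactSupport h) :
    ∫ x, g x * pd i h x = - ∫ x, pd i g x * h x := by
  have hgc : Continuous (pd i g) := (contDiff_pd (n := 0) i hg).continuous
  have hhc : Continuous (pd i h) := (contDiff_pd (n := 0) i hh).continuous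
  exact integral_mul_fderiv_eq_neg_fderiv_mul_of_integrable
    ((hgc.mul hh.continuous).integrable_of_hasCompactSupport hsupp.mul_left)
    ((hg.continuous.mul hhc).integrable_of_hasCompactSupport (hcs_pd i hsupp).mul_left)
    ((hg.continuous.mul hh.continuous).integrable_of_hasCompactSupport hsupp.mul_left)
    (fun x _ => (hg.differentiable one_ne_zero).differentiableAt)
    (fun x _ => (hh.differentiable one_ne_zero).differentiableAt)

end helpers

/-- Error estimate: if `ℒp = 0` on `Ω`, then
`C₀² ∫_Ω (p - p_N)² ≤ 4 ∫_Ω (ℒ p_N)²`. -/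
theorem stmt_4 {d : ℕ} (hd : 1 ≤ d)
    (Ω : Set (Fin d → ℝ)) (hΩopen : IsOpen Ω) (hΩbdd : Bornology.IsBounded Ω)
    (f : (Fin d → ℝ) → Fin d → ℝ) (hf : ContDiff ℝ 1 f)
    (D : (Fin d → ℝ) → Fin d → Fin d → ℝ) (hD : ContDiff ℝ 2 D)
    (C_D : ℝ) (hCD : 0 < C_D)
    (hell : ∀ x ∈ Ω, ∀ ξ : Fin d → ℝ,
      C_D * ∑ i, (ξ i) ^ 2 ≤ ∑ i, ∑ j, D x i j * ξ i * ξ j)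
    (C_P : ℝ) (hCP : 0 < C_P)
    (hpoincare : ∀ u : (Fin d → ℝ) → ℝ, ContDiff ℝ 1 u → HasCompactSupport u →
      tsupport u ⊆ Ω → ∫ x in Ω, (u x) ^ 2 ≤ C_P * ∫ x in Ω, ∑ i, (pd i u x) ^ 2)
    (C₀ : ℝ) (hC0 : 0 < C₀)
    (hgap : ∀ x ∈ Ω, C₀ ≤ C_D / C_P - divb f D x)
    (p p_N : (Fin d → ℝ) → ℝ)
    (hp : ContDiff ℝ 2 p) (hpsupp : HasCompactSupport p) (hpΩ : tsupport p ⊆ Ω)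
    (hpN : ContDiff ℝ 2 p_N) (hpNsupp : HasCompactSupport p_N)
    (hpNΩ : tsupport p_N ⊆ Ω)
    (hsol : ∀ x ∈ Ω, fokkerPlanck f D p x = 0) :
    C₀ ^ 2 * ∫ x in Ω, (p x - p_N x) ^ 2
      ≤ 4 * ∫ x in Ω, (fokkerPlanck f D p_N x) ^ 2 := by
  classical
  -- component regularity
  have hDij : ∀ i j, ContDiff ℝ 2 (fun y => D y i j) :=
    fun i j => contDiff_pi.mp (contDiff_pi.mp hD i) j
  have hfi : ∀ i, ContDiff ℝ 1 (fun y => f y i) := fun i => contDiff_pi.mp hf i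
  -- the error function
  set e : (Fin d → ℝ) → ℝ := fun x => p x - p_N x with he_def
  have he : ContDiff ℝ 2 e := hp.sub hpN
  clear_value e
  have he1 : ContDiff ℝ 1 e := he.of_le (by norm_num)
  have h1 : support e ⊆ tsupport p ∪ tsupport p_N := by
    intro x hx
    by_contra hc
    simp only [Set.mem_union, not_or] at hc
    apply hx
    have h2 : p x = 0 := image_eq_zero_of_notMem_tsupport hc.1
    have h3 : p_N x = 0 := image_eq_zero_of_notMem_tsupport hc.2
    simp [he_def, h2, h3]
  have h4 : tsupport e ⊆ tsupport p ∪ tsupport p_N :=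
    closure_minimal h1 ((isClosed_tsupport p).union (isClosed_tsupport p_N))
  have hesupp : HasCompactSupport e :=
    IsCompact.of_isClosed_subset (hpsupp.union hpNsupp) (isClosed_tsupport e) h4
  have heΩ : tsupport e ⊆ Ω := h4.trans (Set.union_subset hpΩ hpNΩ)
  have ezero : ∀ x ∉ Ω, e x = 0 := fun x hx =>
    image_eq_zero_of_notMem_tsupport (fun h => hx (heΩ h))
  have hediff : ∀ x, DifferentiableAt ℝ e x := fun x =>
    (he1.differentiable one_ne_zero).differentiableAt
  have pde_zero : ∀ (i : Fin d), ∀ x ∉ Ω, pd i e x = 0 := fun i x hx =>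
    pd_zero_of i subset_rfl (fun h => hx (heΩ h))
  have hcs_of : ∀ {F : (Fin d → ℝ) → ℝ}, (∀ x ∉ tsupport e, F x = 0) → HasCompactSupport F :=
    fun {F} h0 => hesupp.mono' (fun x hx => by by_contra hc; exact hx (h0 x hc))
  -- the flux functions G i
  set G : Fin d → (Fin d → ℝ) → ℝ :=
    fun i y => (1/2 : ℝ) * (∑ j, pd j (fun z => D z i j * e z) y) - f y i * e y with hG_def
  clear_value G
  have hAij : ∀ i j, ContDiff ℝ 2 (fun z => D z i j * e z) := fun i j => (hDij i j).mul he
  have hpdA_cd : ∀ i j, ContDiff ℝ 1 (pd j (fun z => D z i j * e z)) :=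
    fun i j => contDiff_pd (n := 1) j (hAij i j)
  have hGcd : ∀ i, ContDiff ℝ 1 (G i) := fun i => by
    rw [hG_def]
    exact (contDiff_const.mul (ContDiff.sum fun j _ => hpdA_cd i j)).sub ((hfi i).mul he1)
  have hGsupp0 : ∀ i, ∀ x ∉ tsupport e, G i x = 0 := by
    intro i x hx
    have h5 : ∀ j : Fin d, pd j (fun z => D z i j * e z) x = 0 := fun j =>
      pd_zero_of j tsupport_mul_subset_right hx
    have h6 : e x = 0 := image_eq_zero_of_notMem_tsupport hx
    simp [hG_def, h5, h6]
  have hGsupp : ∀ i, HasCompactSupport (G i) := fun i => hcs_of (hGsupp0 i)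
  -- Step A : pointwise divergence form of the operator
  have key1 : ∀ x, fokkerPlanck f D e x = ∑ i, pd i (G i) x := by
    intro x
    have hpdG : ∀ i, pd i (G i) x
        = (1/2 : ℝ) * (∑ j, pd i (pd j (fun z => D z i j * e z)) x)
          - pd i (fun y => f y i * e y) x := by
      intro i
      have hSd : DifferentiableAt ℝ
          (fun y => (∑ j, pd j (fun z => D z i j * e z) y)) x :=
        (((ContDiff.sum fun j _ => hpdA_cd i j)).differentiable one_ne_zero).differentiableAt
      have hS : DifferentiableAt ℝ
          (fun y => (1/2 : ℝ) * (∑ j, pd j (fun z => D z i j * e z) y)) x :=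
        ((contDiff_const.mul (ContDiff.sum fun j _ => hpdA_cd i j)).differentiable
          one_ne_zero).differentiableAt
      have hfe : DifferentiableAt ℝ (fun y => f y i * e y) x :=
        (((hfi i).mul he1).differentiable one_ne_zero).differentiableAt
      have h7 := pd_sub (g := fun y => (1/2 : ℝ) * (∑ j, pd j (fun z => D z i j * e z) y))
        (h := fun y => f y i * e y) hS hfe i
      rw [hG_def]
      rw [h7, pd_const_mul hSd ((1:ℝ)/2) i,
        pd_sum (fun j _ => ((hpdA_cd i j).differentiable one_ne_zero).differentiableAt) i]
    simp only [hpdG]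
    simp only [fokkerPlanck]
    rw [Finset.sum_sub_distrib, ← Finset.mul_sum]
    ring
  -- pointwise expansion of G
  have Gval : ∀ i x, G i x = bvec f D x i * e x + (1/2 : ℝ) * ∑ j, D x i j * pd j e x := by
    intro i x
    have h7 : ∀ j : Fin d, pd j (fun z => D z i j * e z) x
        = pd j (fun y => D y i j) x * e x + D x i j * pd j e x := fun j =>
      pd_mul (((hDij i j).differentiable (by norm_num)).differentiableAt) (hediff x) j
    rw [hG_def]
    simp only [bvec]
    rw [Finset.sum_congr rfl (fun j _ => h7 j), Finset.sum_add_distrib, ← Finset.sum_mul]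
    ring
  -- regularity of b
  have hbi_cd : ∀ i, ContDiff ℝ 1 (fun y => bvec f D y i) := by
    intro i
    simp only [bvec]
    exact (contDiff_const.mul
      (ContDiff.sum fun j _ => contDiff_pd (n := 1) j (hDij i j))).sub (hfi i)
  -- continuity inventory
  have hec : Continuous e := he.continuous
  have hpde_c : ∀ i, Continuous (pd i e) := fun i => (contDiff_pd (n := 0) i he1).continuous
  have hbc : ∀ i, Continuous (fun y => bvec f D y i) := fun i => (hbi_cd i).continuous
  have hpdb_c : ∀ i, Continuous (pd i (fun y => bvec f D y i)) := fun i =>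
    (contDiff_pd (n := 0) i (hbi_cd i)).continuous
  have hDc : ∀ i j, Continuous (fun y => D y i j) := fun i j => (hDij i j).continuous
  -- integrability inventory
  have hint_eG : ∀ i, Integrable (fun x => e x * pd i (G i) x) := fun i =>
    (hec.mul (contDiff_pd (n := 0) i (hGcd i)).continuous).integrable_of_hasCompactSupport
      (hcs_pd i (hGsupp i)).mul_left
  have hint_beps : ∀ i, Integrable (fun x => bvec f D x i * (e x * pd i e x)) := fun i =>
    ((hbc i).mul (hec.mul (hpde_c i))).integrable_of_hasCompactSupport
      (hcs_of (fun x hx => by simp only [Pi.mul_apply]; rw [image_eq_zero_of_notMem_tsupport hx]; ring))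
  have hint_Dsum : ∀ i, Integrable (fun x => ∑ j, D x i j * pd i e x * pd j e x) := fun i =>
    (continuous_finset_sum _ fun j _ =>
      ((hDc i j).mul (hpde_c i)).mul (hpde_c j)).integrable_of_hasCompactSupport
      (hcs_of (fun x hx => by
        have h8 : pd i e x = 0 := pd_zero_of i subset_rfl hx
        simp [h8]))
  have hint_Dsum2 : Integrable (fun x => ∑ i, ∑ j, D x i j * pd i e x * pd j e x) :=
    (continuous_finset_sum _ fun i _ => continuous_finset_sum _ fun j _ =>
      ((hDc i j).mul (hpde_c i)).mul (hpde_c j)).integrable_of_hasCompactSupport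
      (hcs_of (fun x hx => by
        have h8 : ∀ i : Fin d, pd i e x = 0 := fun i => pd_zero_of i subset_rfl hx
        simp [h8]))
  have hint_pdb : ∀ i, Integrable (fun x => pd i (fun y => bvec f D y i) x * (e x * e x)) :=
    fun i => ((hpdb_c i).mul (hec.mul hec)).integrable_of_hasCompactSupport
      (hcs_of (fun x hx => by simp only [Pi.mul_apply]; rw [image_eq_zero_of_notMem_tsupport hx]; ring))
  -- Step 1: split the integral of e * L e
  have step1 : ∫ x, e x * fokkerPlanck f D e x = ∑ i, ∫ x, e x * pd i (G i) x := by
    rw [← integral_finset_sum _ (fun i _ => hint_eG i)]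
    congr 1
    funext x
    rw [key1 x, Finset.mul_sum]
  -- Step 2: integration by parts
  have step2 : ∀ i, ∫ x, e x * pd i (G i) x = - ∫ x, pd i e x * G i x := fun i =>
    my_ibp i he1 (hGcd i) (hGsupp i)
  -- Step 3 : expand the integrand
  have step3 : ∀ i, ∫ x, pd i e x * G i x
      = (∫ x, bvec f D x i * (e x * pd i e x))
        + (1/2 : ℝ) * ∫ x, ∑ j, D x i j * pd i e x * pd j e x := by
    intro i
    have h8 : ∀ x, pd i e x * G i x = bvec f D x i * (e x * pd i e x)
        + (1/2 : ℝ) * (∑ j, D x i j * pd i e x * pd j e x) := by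
      intro x
      have h9 : ∑ j, D x i j * pd i e x * pd j e x
          = pd i e x * ∑ j, D x i j * pd j e x := by
        rw [Finset.mul_sum]
        exact Finset.sum_congr rfl fun j _ => by ring
      rw [Gval i x, h9]
      ring
    rw [show (fun x => pd i e x * G i x) = fun x => bvec f D x i * (e x * pd i e x)
        + (1/2 : ℝ) * (∑ j, D x i j * pd i e x * pd j e x) from funext h8]
    rw [integral_add (hint_beps i) ((hint_Dsum i).const_mul _), integral_const_mul]
  -- Step 4 : integration by parts for the b term
  have step4 : ∀ i, ∫ x, bvec f D x i * (e x * pd i e x)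
      = -(1/2 : ℝ) * ∫ x, pd i (fun y => bvec f D y i) x * (e x * e x) := by
    intro i
    have he2cd : ContDiff ℝ 1 (fun y => e y * e y) := he1.mul he1
    have he2supp : HasCompactSupport (fun y => e y * e y) :=
      hcs_of (fun x hx => by rw [image_eq_zero_of_notMem_tsupport hx]; ring)
    have hibp := my_ibp i (hbi_cd i) he2cd he2supp
    have h10 : ∀ x, bvec f D x i * (e x * pd i e x)
        = (1/2 : ℝ) * (bvec f D x i * pd i (fun y => e y * e y) x) := by
      intro x
      rw [pd_mul (hediff x) (hediff x) i]
      ring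
    rw [show (fun x => bvec f D x i * (e x * pd i e x))
        = fun x => (1/2 : ℝ) * (bvec f D x i * pd i (fun y => e y * e y) x) from funext h10]
    rw [integral_const_mul, hibp]
    ring
  have stepAll : ∀ i, ∫ x, e x * pd i (G i) x
      = (1/2 : ℝ) * (∫ x, pd i (fun y => bvec f D y i) x * (e x * e x))
        - (1/2 : ℝ) * ∫ x, ∑ j, D x i j * pd i e x * pd j e x := by
    intro i
    rw [step2 i, step3 i, step4 i]
    ring
  -- the main energy identity
  have hJ : ∫ x, e x * fokkerPlanck f D e x
      = (1/2 : ℝ) * (∫ x, divb f D x * (e x * e x))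
        - (1/2 : ℝ) * ∫ x, ∑ i, ∑ j, D x i j * pd i e x * pd j e x := by
    rw [step1, Finset.sum_congr rfl (fun i _ => stepAll i), Finset.sum_sub_distrib,
      ← Finset.mul_sum, ← Finset.mul_sum]
    congr 2
    · rw [← integral_finset_sum _ (fun i _ => hint_pdb i)]
      congr 1
      funext x
      simp only [divb]
      rw [Finset.sum_mul]
    · rw [← integral_finset_sum _ (fun i _ => hint_Dsum i)]
  -- linearity of the Fokker-Planck operator on e = p - p_N
  have hpdiff : ∀ x, DifferentiableAt ℝ p x := fun x =>
    (hp.differentiable (by norm_num)).differentiableAt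
  have hpNdiff : ∀ x, DifferentiableAt ℝ p_N x := fun x =>
    (hpN.differentiable (by norm_num)).differentiableAt
  have key0 : ∀ x, fokkerPlanck f D e x
      = fokkerPlanck f D p x - fokkerPlanck f D p_N x := by
    intro x
    have hterm1 : ∀ i : Fin d, pd i (fun y => f y i * e y) x
        = pd i (fun y => f y i * p y) x - pd i (fun y => f y i * p_N y) x := by
      intro i
      have hrw : (fun y => f y i * e y) = fun y => (f y i * p y) - (f y i * p_N y) := by
        funext y
        simp only [he_def]
        ring
      rw [hrw, pd_sub (g := fun y => f y i * p y) (h := fun y => f y i * p_N y)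
        (((hfi i).mul (hp.of_le (by norm_num))).differentiable one_ne_zero).differentiableAt
        (((hfi i).mul (hpN.of_le (by norm_num))).differentiable one_ne_zero).differentiableAt i]
    have hterm2 : ∀ i j : Fin d, pd i (pd j (fun y => D y i j * e y)) x
        = pd i (pd j (fun y => D y i j * p y)) x
          - pd i (pd j (fun y => D y i j * p_N y)) x := by
      intro i j
      have hrwfun : pd j (fun y => D y i j * e y)
          = fun z => pd j (fun y => D y i j * p y) z - pd j (fun y => D y i j * p_N y) z := by
        funext z
        have hrw : (fun y => D y i j * e y)
            = fun y => (D y i j * p y) - (D y i j * p_N y) := by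
          funext y
          simp only [he_def]
          ring
        rw [hrw, pd_sub (g := fun y => D y i j * p y) (h := fun y => D y i j * p_N y)
          (((hDij i j).mul hp).differentiable (by norm_num)).differentiableAt
          (((hDij i j).mul hpN).differentiable (by norm_num)).differentiableAt j]
      rw [hrwfun, pd_sub (g := pd j (fun y => D y i j * p y))
        (h := pd j (fun y => D y i j * p_N y))
        ((contDiff_pd (n := 1) j ((hDij i j).mul hp)).differentiable one_ne_zero).differentiableAt
        ((contDiff_pd (n := 1) j ((hDij i j).mul hpN)).differentiable one_ne_zero).differentiableAt i]
    simp only [fokkerPlanck]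
    rw [Finset.sum_congr rfl (fun i _ => hterm1 i),
      Finset.sum_congr rfl (fun i _ => Finset.sum_congr rfl (fun j _ => hterm2 i j))]
    simp only [Finset.sum_sub_distrib]
    ring
  -- relate to the residual of p_N
  have eLerel : ∀ x, e x * fokkerPlanck f D e x = -(e x * fokkerPlanck f D p_N x) := by
    intro x
    by_cases hx : x ∈ Ω
    · rw [key0 x, hsol x hx]
      ring
    · rw [ezero x hx]
      ring
  have hJpN : ∫ x, e x * fokkerPlanck f D e x = - ∫ x, e x * fokkerPlanck f D p_N x := by
    rw [show (fun x => e x * fokkerPlanck f D e x)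
        = fun x => -(e x * fokkerPlanck f D p_N x) from funext eLerel, integral_neg]
  -- vanishing of L p_N off Ω
  have fp0 : ∀ x ∉ tsupport p_N, fokkerPlanck f D p_N x = 0 := by
    intro x hx
    have t1 : ∀ i : Fin d, pd i (fun y => f y i * p_N y) x = 0 := fun i =>
      pd_zero_of i tsupport_mul_subset_right hx
    have t2 : ∀ i j : Fin d, pd i (pd j (fun y => D y i j * p_N y)) x = 0 := fun i j =>
      pd_zero_of i ((tsupport_pd j _).trans tsupport_mul_subset_right) hx
    simp [fokkerPlanck, t1, t2]
  have LpN_zero : ∀ x ∉ Ω, fokkerPlanck f D p_N x = 0 := fun x hx =>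
    fp0 x (fun h => hx (hpNΩ h))
  have hLpNc : Continuous (fokkerPlanck f D p_N) := by
    show Continuous fun x => -(∑ i, pd i (fun y => f y i * p_N y) x)
      + (1 / 2) * ∑ i, ∑ j, pd i (pd j (fun y => D y i j * p_N y)) x
    apply Continuous.add
    · exact (continuous_finset_sum _ fun i _ =>
        (contDiff_pd (n := 0) i ((hfi i).mul (hpN.of_le (by norm_num)))).continuous).neg
    · exact continuous_const.mul (continuous_finset_sum _ fun i _ =>
        continuous_finset_sum _ fun j _ =>
          (contDiff_pd (n := 0) i (contDiff_pd (n := 1) j ((hDij i j).mul hpN))).continuous)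
  have hLpNsupp : HasCompactSupport (fokkerPlanck f D p_N) :=
    hpNsupp.mono' (fun x hx => by by_contra hc; exact hx (fp0 x hc))
  -- integrability
  have hIe2 : Integrable (fun x => e x * e x) :=
    (hec.mul hec).integrable_of_hasCompactSupport
      (hcs_of fun x hx => by simp only [Pi.mul_apply]; rw [image_eq_zero_of_notMem_tsupport hx]; ring)
  have hIdiv : Integrable (fun x => divb f D x * (e x * e x)) := by
    have hdivc : Continuous (divb f D) := by
      show Continuous fun x => ∑ i, pd i (fun y => bvec f D y i) x
      exact continuous_finset_sum _ fun i _ => hpdb_c i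
    exact (hdivc.mul (hec.mul hec)).integrable_of_hasCompactSupport
      (hcs_of fun x hx => by simp only [Pi.mul_apply]; rw [image_eq_zero_of_notMem_tsupport hx]; ring)
  have hIeL : Integrable (fun x => e x * fokkerPlanck f D p_N x) :=
    (hec.mul hLpNc).integrable_of_hasCompactSupport
      (hcs_of fun x hx => by simp only [Pi.mul_apply]; rw [image_eq_zero_of_notMem_tsupport hx]; ring)
  have hILpN2 : Integrable (fun x => fokkerPlanck f D p_N x * fokkerPlanck f D p_N x) :=
    (hLpNc.mul hLpNc).integrable_of_hasCompactSupport hLpNsupp.mul_left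
  have hIgrad : Integrable (fun x => ∑ i, pd i e x ^ 2) :=
    (continuous_finset_sum _ fun i _ => (hpde_c i).pow 2).integrable_of_hasCompactSupport
      (hcs_of fun x hx => Finset.sum_eq_zero fun i _ => by
        simp [pd_zero_of i subset_rfl hx])
  -- set-integral / full-integral conversions
  have hset : ∀ {F : (Fin d → ℝ) → ℝ}, (∀ x ∉ Ω, F x = 0) → ∫ x in Ω, F x = ∫ x, F x :=
    fun {F} h => setIntegral_eq_integral_of_forall_compl_eq_zero h
  have hAfull : ∫ x, e x * e x = ∫ x in Ω, e x * e x :=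
    (hset (fun x hx => by rw [ezero x hx]; ring)).symm
  have hdivconv : ∫ x, divb f D x * (e x * e x) = ∫ x in Ω, divb f D x * (e x * e x) :=
    (hset (fun x hx => by rw [ezero x hx]; ring)).symm
  have hDconv : ∫ x, (∑ i, ∑ j, D x i j * pd i e x * pd j e x)
      = ∫ x in Ω, ∑ i, ∑ j, D x i j * pd i e x * pd j e x :=
    (hset (fun x hx => by
      refine Finset.sum_eq_zero fun i _ => Finset.sum_eq_zero fun j _ => ?_
      rw [pde_zero i x hx]
      ring)).symm
  have hAconv : ∫ x in Ω, (p x - p_N x) ^ 2 = ∫ x in Ω, e x * e x := by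
    rw [show (fun x => (p x - p_N x) ^ 2) = fun x => e x * e x from funext fun x => by
      simp only [he_def]; ring]
  have hBconv : ∫ x in Ω, (fokkerPlanck f D p_N x) ^ 2
      = ∫ x, fokkerPlanck f D p_N x * fokkerPlanck f D p_N x := by
    rw [show (fun x => (fokkerPlanck f D p_N x) ^ 2)
      = fun x => fokkerPlanck f D p_N x * fokkerPlanck f D p_N x from funext fun x => by ring]
    exact hset fun x hx => by rw [LpN_zero x hx]; ring
  -- Poincare inequality for e
  have hPoin : ∫ x in Ω, e x * e x ≤ C_P * ∫ x in Ω, ∑ i, pd i e x ^ 2 := by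
    have h := hpoincare e he1 hesupp heΩ
    rwa [show (fun x => e x ^ 2) = fun x => e x * e x from funext fun x => by ring] at h
  -- ellipticity
  have hell2 : C_D * (∫ x in Ω, ∑ i, pd i e x ^ 2)
      ≤ ∫ x in Ω, ∑ i, ∑ j, D x i j * pd i e x * pd j e x := by
    rw [← integral_const_mul]
    apply setIntegral_mono_on ((hIgrad.const_mul _).integrableOn)
      (hint_Dsum2.integrableOn) hΩopen.measurableSet
    intro x hx
    exact hell x hx (fun i => pd i e x)
  have h13 : C_D / C_P * (∫ x in Ω, e x * e x)
      ≤ ∫ x in Ω, ∑ i, ∑ j, D x i j * pd i e x * pd j e x := by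
    calc C_D / C_P * (∫ x in Ω, e x * e x)
        ≤ C_D / C_P * (C_P * ∫ x in Ω, ∑ i, pd i e x ^ 2) :=
          mul_le_mul_of_nonneg_left hPoin (by positivity)
      _ = C_D * ∫ x in Ω, ∑ i, pd i e x ^ 2 := by field_simp
      _ ≤ _ := hell2
  -- gap condition
  have hgap2 : ∫ x in Ω, divb f D x * (e x * e x)
      ≤ (C_D / C_P - C₀) * ∫ x in Ω, e x * e x := by
    calc ∫ x in Ω, divb f D x * (e x * e x)
        ≤ ∫ x in Ω, (C_D / C_P - C₀) * (e x * e x) := by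
          apply setIntegral_mono_on hIdiv.integrableOn
            ((hIe2.const_mul _).integrableOn) hΩopen.measurableSet
          intro x hx
          exact mul_le_mul_of_nonneg_right (by linarith [hgap x hx]) (mul_self_nonneg _)
      _ = (C_D / C_P - C₀) * ∫ x in Ω, e x * e x := integral_const_mul _ _
  -- lower bound for the residual pairing
  have h12 : ∫ x, e x * fokkerPlanck f D e x
      ≤ -(C₀/2) * ∫ x in Ω, e x * e x := by
    rw [hJ, hdivconv, hDconv]
    linarith [hgap2, h13]
  have hlow : (C₀/2) * (∫ x in Ω, e x * e x) ≤ ∫ x, e x * fokkerPlanck f D p_N x := by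
    rw [hJpN] at h12
    linarith
  -- upper bound via Young's inequality
  have hup' : C₀ * ∫ x, e x * fokkerPlanck f D p_N x
      ≤ (C₀^2/4) * (∫ x in Ω, e x * e x)
        + ∫ x, fokkerPlanck f D p_N x * fokkerPlanck f D p_N x := by
    have hpt : ∀ x, C₀ * (e x * fokkerPlanck f D p_N x)
        ≤ (C₀^2/4) * (e x * e x) + fokkerPlanck f D p_N x * fokkerPlanck f D p_N x := by
      intro x
      nlinarith [sq_nonneg (C₀ * e x - 2 * fokkerPlanck f D p_N x)]
    rw [← integral_const_mul]
    calc ∫ x, C₀ * (e x * fokkerPlanck f D p_N x)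
        ≤ ∫ x, ((C₀^2/4) * (e x * e x)
            + fokkerPlanck f D p_N x * fokkerPlanck f D p_N x) :=
          integral_mono (hIeL.const_mul _) ((hIe2.const_mul _).add hILpN2) hpt
      _ = (C₀^2/4) * (∫ x, e x * e x)
            + ∫ x, fokkerPlanck f D p_N x * fokkerPlanck f D p_N x := by
          rw [integral_add (hIe2.const_mul _) hILpN2, integral_const_mul]
      _ = _ := by rw [hAfull]
  rw [hAconv, hBconv]
  linarith [mul_le_mul_of_nonneg_left hlow hC0.le, hup']
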